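/- arXiv:1607.01345 — 2 statements merged into one kernel-verified Lean document; each statement's English description precedes it below -/
import Mathlib

section
/- Data processing inequality for correlation ratio and maximal correlation: if X → Y → Z is a Markov chain (X and Z are conditionally independent given Y), then ρ(X,Z) ≤ θ(X,Y)·θ(Z,Y), for real-valued square-integrable X, Z with positive variances. -/
open MeasureTheory ProbabilityTheory

noncomputable def cov {Ω : Type*} [MeasurableSpace Ω] (μ : Measure Ω) (X Y : Ω → ℝ) : ℝ :=
  ∫ ω, (X ω - ∫ x, X x ∂μ) * (Y ω - ∫ x, Y x ∂μ) ∂μ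

noncomputable def corr {Ω : Type*} [MeasurableSpace Ω] (μ : Measure Ω) (X Y : Ω → ℝ) : ℝ :=
  cov μ X Y / (Real.sqrt (variance X μ) * Real.sqrt (variance Y μ))

/-- Correlation ratio `θ(X, Y) = √(var(E[X|Y]) / var(X))`. -/
noncomputable def corrRatio {Ω β : Type*} [m : MeasurableSpace Ω] [mβ : MeasurableSpace β]
    (μ : Measure Ω) (X : Ω → ℝ) (Y : Ω → β) : ℝ :=
  Real.sqrt (variance (μ[X | MeasurableSpace.comap Y mβ]) μ / variance X μ)

open Set

section Aux
variable {α : Type*} [MeasurableSpace α] {ν : Measure α}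

lemma aux_integrable_mul {f g : α → ℝ} (hf : MemLp f 2 ν) (hg : MemLp g 2 ν) :
    Integrable (fun a => f a * g a) ν := by
  have h : MemLp (f • g) 1 ν := hg.smul hf
  rw [memLp_one_iff_integrable] at h
  exact h

lemma aux_cauchy_schwarz {f g : α → ℝ} (hf : MemLp f 2 ν) (hg : MemLp g 2 ν) :
    ∫ a, f a * g a ∂ν ≤ Real.sqrt (∫ a, f a ^ 2 ∂ν) * Real.sqrt (∫ a, g a ^ 2 ∂ν) := by
  have hfg := aux_integrable_mul hf hg
  have h1 : ∫ a, f a * g a ∂ν ≤ ∫ a, |f a| * |g a| ∂ν := by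
    refine integral_mono_ae hfg ?_ ?_
    · simpa [abs_mul] using hfg.abs
    · filter_upwards with a
      rw [← abs_mul]; exact le_abs_self _
  have h2 : ∫ a, |f a| * |g a| ∂ν
      ≤ (∫ a, |f a| ^ (2:ℝ) ∂ν) ^ (1/2:ℝ) * (∫ a, |g a| ^ (2:ℝ) ∂ν) ^ (1/2:ℝ) := by
    refine integral_mul_le_Lp_mul_Lq_of_nonneg Real.HolderConjugate.two_two
      (Filter.Eventually.of_forall fun a => abs_nonneg _)
      (Filter.Eventually.of_forall fun a => abs_nonneg _) ?_ ?_
    · rw [show ENNReal.ofReal (2:ℝ) = 2 by norm_num]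
      simpa [Real.norm_eq_abs] using hf.norm
    · rw [show ENNReal.ofReal (2:ℝ) = 2 by norm_num]
      simpa [Real.norm_eq_abs] using hg.norm
  have habs2 : ∀ x : ℝ, |x| ^ (2:ℝ) = x ^ 2 := by
    intro x
    rw [show (2:ℝ) = ((2:ℕ):ℝ) by norm_num, Real.rpow_natCast, sq_abs]
  calc ∫ a, f a * g a ∂ν ≤ ∫ a, |f a| * |g a| ∂ν := h1
    _ ≤ (∫ a, |f a| ^ (2:ℝ) ∂ν) ^ (1/2:ℝ) * (∫ a, |g a| ^ (2:ℝ) ∂ν) ^ (1/2:ℝ) := h2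
    _ = Real.sqrt (∫ a, f a ^ 2 ∂ν) * Real.sqrt (∫ a, g a ^ 2 ∂ν) := by
        simp_rw [habs2, Real.sqrt_eq_rpow]

lemma aux_sq_integral_le [IsProbabilityMeasure ν] {f : α → ℝ} (hf : MemLp f 2 ν) :
    (∫ a, f a ∂ν) ^ 2 ≤ ∫ a, f a ^ 2 ∂ν := by
  have habs : |∫ a, f a ∂ν| ≤ ∫ a, |f a| ∂ν := by
    simpa [Real.norm_eq_abs] using norm_integral_le_integral_norm (μ := ν) f
  have h1 : ∫ a, |f a| ∂ν ≤ Real.sqrt (∫ a, f a ^ 2 ∂ν) := by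
    have h := aux_cauchy_schwarz (f := fun a => |f a|) (g := fun _ => (1:ℝ))
      (by simpa [Real.norm_eq_abs] using hf.norm) (memLp_const 1)
    simpa [sq_abs] using h
  have h2 : 0 ≤ ∫ a, f a ^ 2 ∂ν := integral_nonneg fun a => sq_nonneg _
  calc (∫ a, f a ∂ν) ^ 2 = |∫ a, f a ∂ν| ^ 2 := (sq_abs _).symm
    _ ≤ (∫ a, |f a| ∂ν) ^ 2 := by
        exact pow_le_pow_left₀ (abs_nonneg _) (habs.trans (le_refl _)) 2
    _ ≤ Real.sqrt (∫ a, f a ^ 2 ∂ν) ^ 2 := by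
        exact pow_le_pow_left₀ (integral_nonneg fun a => abs_nonneg _) h1 2
    _ = ∫ a, f a ^ 2 ∂ν := Real.sq_sqrt h2

end Aux

theorem dpi_corr_le_corrRatio_mul {Ω β : Type*} [m : MeasurableSpace Ω] [StandardBorelSpace Ω]
    [mβ : MeasurableSpace β] (μ : Measure Ω) [IsProbabilityMeasure μ]
    (X Z : Ω → ℝ) (Y : Ω → β)
    (hX : MemLp X 2 μ) (hZ : MemLp Z 2 μ) (hY : Measurable Y)
    (hvX : 0 < variance X μ) (hvZ : 0 < variance Z μ)
    (hMarkov : CondIndepFun (MeasurableSpace.comap Y mβ) hY.comap_le X Z μ) :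
    corr μ X Z ≤ corrRatio μ X Y * corrRatio μ Z Y := by
  have hm' : MeasurableSpace.comap Y mβ ≤ m := hY.comap_le
  set κ := condExpKernel μ (MeasurableSpace.comap Y mβ) with hκdef
  have hXi : Integrable X μ := hX.integrable one_le_two
  have hZi : Integrable Z μ := hZ.integrable one_le_two
  have hXZi : Integrable (fun a => X a * Z a) μ := aux_integrable_mul hX hZ
  -- null sets propagate to the kernel
  have hnull : ∀ {N : Set Ω}, MeasurableSet N → μ N = 0 → ∀ᵐ ω ∂μ, κ ω N = 0 := by
    intro N hN hNμ
    have h1 : (fun ω => (κ ω N).toReal) =ᵐ[μ] μ⟦N | MeasurableSpace.comap Y mβ⟧ := condExpKernel_ae_eq_condExp hm' hN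
    have h2 : (μ⟦N | MeasurableSpace.comap Y mβ⟧ : Ω → ℝ) =ᵐ[μ] 0 := by
      have hind : (N.indicator (fun _ => (1:ℝ))) =ᵐ[μ] (0 : Ω → ℝ) := by
        filter_upwards [measure_eq_zero_iff_ae_notMem.mp hNμ] with a ha
        simp [Set.indicator_of_notMem ha]
      calc (μ⟦N | MeasurableSpace.comap Y mβ⟧ : Ω → ℝ) =ᵐ[μ] μ[(0 : Ω → ℝ) | MeasurableSpace.comap Y mβ] := condExp_congr_ae hind
        _ = 0 := condExp_zero
    have h3 := h1.trans h2
    filter_upwards [h3] with ω hω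
    have hne : κ ω N ≠ ⊤ := measure_ne_top _ _
    simpa [ENNReal.toReal_eq_zero_iff, hne] using hω
  -- the product formula under the kernel
  obtain ⟨X₀, hX₀m, hXX₀⟩ := hX.aestronglyMeasurable
  obtain ⟨Z₀, hZ₀m, hZZ₀⟩ := hZ.aestronglyMeasurable
  set NX := toMeasurable μ {a | X a ≠ X₀ a} with hNXdef
  set NZ := toMeasurable μ {a | Z a ≠ Z₀ a} with hNZdef
  have hNXnull : μ NX = 0 := by
    rw [measure_toMeasurable]; exact hXX₀
  have hNZnull : μ NZ = 0 := by
    rw [measure_toMeasurable]; exact hZZ₀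
  have hK : Kernel.IndepFun X Z κ (μ.trim hm') := hMarkov
  have hpair : ∀ q r : ℚ, ∀ᵐ ω ∂μ,
      κ ω (X ⁻¹' Iic (q:ℝ) ∩ Z ⁻¹' Iic (r:ℝ))
        = κ ω (X ⁻¹' Iic (q:ℝ)) * κ ω (Z ⁻¹' Iic (r:ℝ)) := fun q r =>
    ae_of_ae_trim hm' ((Kernel.indepFun_iff_measure_inter_preimage_eq_mul.mp hK) _ _
      measurableSet_Iic measurableSet_Iic)
  have hpair' : ∀ᵐ ω ∂μ, ∀ q r : ℚ,
      κ ω (X ⁻¹' Iic (q:ℝ) ∩ Z ⁻¹' Iic (r:ℝ))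
        = κ ω (X ⁻¹' Iic (q:ℝ)) * κ ω (Z ⁻¹' Iic (r:ℝ)) := by
    rw [ae_all_iff]; intro q; rw [ae_all_iff]; exact hpair q
  have hprod : ∀ᵐ ω ∂μ,
      ∫ y, X y * Z y ∂(κ ω) = (∫ y, X y ∂(κ ω)) * ∫ y, Z y ∂(κ ω) := by
    filter_upwards [hpair', hnull (measurableSet_toMeasurable _ _) hNXnull,
      hnull (measurableSet_toMeasurable _ _) hNZnull,
      hXi.condExpKernel_ae (m := MeasurableSpace.comap Y mβ),
      hZi.condExpKernel_ae (m := MeasurableSpace.comap Y mβ)] with ω hω hNX0 hNZ0 hIX hIZ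
    have hXae : X =ᵐ[κ ω] X₀ := by
      refine measure_mono_null (fun a ha => ?_) hNX0
      exact subset_toMeasurable μ _ ha
    have hZae : Z =ᵐ[κ ω] Z₀ := by
      refine measure_mono_null (fun a ha => ?_) hNZ0
      exact subset_toMeasurable μ _ ha
    have e1 : ∀ q : ℚ, κ ω (X₀ ⁻¹' Iic (q:ℝ)) = κ ω (X ⁻¹' Iic (q:ℝ)) := by
      intro q
      refine measure_congr ?_
      filter_upwards [hXae] with a ha
      show (X₀ a ≤ (q:ℝ)) = (X a ≤ (q:ℝ))
      rw [ha]
    have e2 : ∀ r : ℚ, κ ω (Z₀ ⁻¹' Iic (r:ℝ)) = κ ω (Z ⁻¹' Iic (r:ℝ)) := by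
      intro r
      refine measure_congr ?_
      filter_upwards [hZae] with a ha
      show (Z₀ a ≤ (r:ℝ)) = (Z a ≤ (r:ℝ))
      rw [ha]
    have hind : IndepFun X₀ Z₀ (κ ω) := by
      rw [IndepFun_iff_Indep]
      have hgen : (Real.measurableSpace : MeasurableSpace ℝ)
          = MeasurableSpace.generateFrom (⋃ q : ℚ, {Iic (q:ℝ)}) := by
        rw [Real.borelSpace.measurable_eq]; exact Real.borel_eq_generateFrom_Iic_rat
      refine IndepSets.indep (hX₀m.measurable.comap_le) (hZ₀m.measurable.comap_le)
        (Real.isPiSystem_Iic_rat.comap X₀) (Real.isPiSystem_Iic_rat.comap Z₀) ?_ ?_ ?_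
      · rw [hgen, MeasurableSpace.comap_generateFrom]; rfl
      · rw [hgen, MeasurableSpace.comap_generateFrom]; rfl
      · rw [IndepSets_iff]
        rintro t1 t2 ⟨s1, hs1, rfl⟩ ⟨s2, hs2, rfl⟩
        simp only [Set.mem_iUnion, Set.mem_singleton_iff] at hs1 hs2
        obtain ⟨q, rfl⟩ := hs1
        obtain ⟨r, rfl⟩ := hs2
        have e3 : κ ω (X₀ ⁻¹' Iic (q:ℝ) ∩ Z₀ ⁻¹' Iic (r:ℝ))
            = κ ω (X ⁻¹' Iic (q:ℝ) ∩ Z ⁻¹' Iic (r:ℝ)) := by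
          refine measure_congr ?_
          filter_upwards [hXae, hZae] with a ha hz
          show (X₀ a ≤ (q:ℝ) ∧ Z₀ a ≤ (r:ℝ)) = (X a ≤ (q:ℝ) ∧ Z a ≤ (r:ℝ))
          rw [ha, hz]
        rw [e3, hω q r, e1 q, e2 r]
    have h0 : ∫ y, X₀ y * Z₀ y ∂(κ ω) = (∫ y, X₀ y ∂(κ ω)) * ∫ y, Z₀ y ∂(κ ω) := by
      exact hind.integral_fun_mul_eq_mul_integral hX₀m.aestronglyMeasurable hZ₀m.aestronglyMeasurable
    rw [integral_congr_ae (show (fun y => X y * Z y) =ᵐ[κ ω] fun y => X₀ y * Z₀ y from hXae.mul hZae), integral_congr_ae hXae, integral_congr_ae hZae]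
    exact h0
  -- conditional expectation identities
  have hXk : μ[X | MeasurableSpace.comap Y mβ] =ᵐ[μ] fun ω => ∫ y, X y ∂(κ ω) :=
    condExp_ae_eq_integral_condExpKernel hm' hXi
  have hZk : μ[Z | MeasurableSpace.comap Y mβ] =ᵐ[μ] fun ω => ∫ y, Z y ∂(κ ω) :=
    condExp_ae_eq_integral_condExpKernel hm' hZi
  have hXZk : μ[(fun a => X a * Z a) | MeasurableSpace.comap Y mβ]
      =ᵐ[μ] fun ω => ∫ y, X y * Z y ∂(κ ω) :=
    condExp_ae_eq_integral_condExpKernel hm' hXZi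
  have hXZcond : μ[(fun a => X a * Z a) | MeasurableSpace.comap Y mβ] =ᵐ[μ]
      fun ω => (μ[X | MeasurableSpace.comap Y mβ]) ω * (μ[Z | MeasurableSpace.comap Y mβ]) ω := by
    filter_upwards [hXk, hZk, hXZk, hprod] with ω h1 h2 h3 h4
    rw [h3, h4, ← h1, ← h2]
  have key : ∫ a, X a * Z a ∂μ
      = ∫ a, (μ[X | MeasurableSpace.comap Y mβ]) a * (μ[Z | MeasurableSpace.comap Y mβ]) a ∂μ := by
    rw [← integral_condExp hm' (f := fun a => X a * Z a)]
    exact integral_congr_ae hXZcond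
  -- conditional expectations are in L2
  have hcond2 : ∀ {W : Ω → ℝ}, MemLp W 2 μ → MemLp (μ[W | MeasurableSpace.comap Y mβ]) 2 μ := by
    intro W hW
    have hWi : Integrable W μ := hW.integrable one_le_two
    have hWk : μ[W | MeasurableSpace.comap Y mβ] =ᵐ[μ] fun ω => ∫ y, W y ∂(κ ω) :=
      condExp_ae_eq_integral_condExpKernel hm' hWi
    have hsm : AEStronglyMeasurable (μ[W | MeasurableSpace.comap Y mβ]) μ :=
      (stronglyMeasurable_condExp.mono hm').aestronglyMeasurable
    rw [memLp_two_iff_integrable_sq hsm]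
    have hsq : AEStronglyMeasurable (fun x => (μ[W | MeasurableSpace.comap Y mβ]) x ^ 2) μ := by
      simp_rw [sq]; exact hsm.mul hsm
    have hbd : ∀ᵐ ω ∂μ, ‖(μ[W | MeasurableSpace.comap Y mβ]) ω ^ 2‖ ≤ ∫ y, W y ^ 2 ∂(κ ω) := by
      filter_upwards [hWk, hW.integrable_sq.condExpKernel_ae (m := MeasurableSpace.comap Y mβ),
        hWi.condExpKernel_ae (m := MeasurableSpace.comap Y mβ)] with ω h1 h2 h3
      rw [Real.norm_eq_abs, abs_of_nonneg (sq_nonneg _), h1]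
      have hW2 : MemLp W 2 (κ ω) := (memLp_two_iff_integrable_sq h3.aestronglyMeasurable).mpr h2
      exact aux_sq_integral_le hW2
    exact Integrable.mono'
      (hW.integrable_sq.integral_condExpKernel (m := MeasurableSpace.comap Y mβ)) hsq hbd
  have hX'2 : MemLp (μ[X | MeasurableSpace.comap Y mβ]) 2 μ := hcond2 hX
  have hZ'2 : MemLp (μ[Z | MeasurableSpace.comap Y mβ]) 2 μ := hcond2 hZ
  -- covariance expansion
  have hcovEq : ∀ (U V : Ω → ℝ), Integrable U μ → Integrable V μ →
      Integrable (fun a => U a * V a) μ →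
      cov μ U V = ∫ a, U a * V a ∂μ - (∫ a, U a ∂μ) * ∫ a, V a ∂μ := by
    intro U V hU hV hUV
    have h1 : Integrable (fun a => U a * V a - (∫ x, U x ∂μ) * V a) μ :=
      hUV.sub (hV.const_mul _)
    have h2 : Integrable (fun a => U a * V a - (∫ x, U x ∂μ) * V a
        - (∫ x, V x ∂μ) * U a) μ := h1.sub (hU.const_mul _)
    have heq : ∀ a, (U a - ∫ x, U x ∂μ) * (V a - ∫ x, V x ∂μ)
        = U a * V a - (∫ x, U x ∂μ) * V a - (∫ x, V x ∂μ) * U a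
          + (∫ x, U x ∂μ) * (∫ x, V x ∂μ) := fun a => by ring
    rw [cov]
    simp_rw [heq]
    rw [integral_add h2 (integrable_const _), integral_sub h1 (hU.const_mul _),
      integral_sub hUV (hV.const_mul _), integral_const_mul, integral_const_mul, integral_const]
    simp only [probReal_univ, measure_univ, ENNReal.toReal_one, one_smul]
    ring
  have hEX' : ∫ a, (μ[X | MeasurableSpace.comap Y mβ]) a ∂μ = ∫ a, X a ∂μ :=
    integral_condExp hm' (f := X)
  have hEZ' : ∫ a, (μ[Z | MeasurableSpace.comap Y mβ]) a ∂μ = ∫ a, Z a ∂μ :=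
    integral_condExp hm' (f := Z)
  have hcovXZ : cov μ X Z
      = cov μ (μ[X | MeasurableSpace.comap Y mβ]) (μ[Z | MeasurableSpace.comap Y mβ]) := by
    rw [hcovEq X Z hXi hZi hXZi,
      hcovEq _ _ integrable_condExp integrable_condExp (aux_integrable_mul hX'2 hZ'2),
      key, hEX', hEZ']
  -- variance formulas
  have hvarX' : ∫ a, ((μ[X | MeasurableSpace.comap Y mβ]) a
        - ∫ x, (μ[X | MeasurableSpace.comap Y mβ]) x ∂μ) ^ 2 ∂μ
      = variance (μ[X | MeasurableSpace.comap Y mβ]) μ := by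
    exact (variance_eq_integral hX'2.aemeasurable).symm
  have hvarZ' : ∫ a, ((μ[Z | MeasurableSpace.comap Y mβ]) a
        - ∫ x, (μ[Z | MeasurableSpace.comap Y mβ]) x ∂μ) ^ 2 ∂μ
      = variance (μ[Z | MeasurableSpace.comap Y mβ]) μ := by
    exact (variance_eq_integral hZ'2.aemeasurable).symm
  have hCS : cov μ (μ[X | MeasurableSpace.comap Y mβ]) (μ[Z | MeasurableSpace.comap Y mβ])
      ≤ Real.sqrt (variance (μ[X | MeasurableSpace.comap Y mβ]) μ)
        * Real.sqrt (variance (μ[Z | MeasurableSpace.comap Y mβ]) μ) := by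
    have h := aux_cauchy_schwarz
      (f := fun a => (μ[X | MeasurableSpace.comap Y mβ]) a
        - ∫ x, (μ[X | MeasurableSpace.comap Y mβ]) x ∂μ)
      (g := fun a => (μ[Z | MeasurableSpace.comap Y mβ]) a
        - ∫ x, (μ[Z | MeasurableSpace.comap Y mβ]) x ∂μ)
      (hX'2.sub (memLp_const _)) (hZ'2.sub (memLp_const _))
    rw [hvarX', hvarZ'] at h
    exact h
  -- conclusion
  have hsX : 0 < Real.sqrt (variance X μ) := Real.sqrt_pos.mpr hvX
  have hsZ : 0 < Real.sqrt (variance Z μ) := Real.sqrt_pos.mpr hvZ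
  unfold corr corrRatio
  rw [Real.sqrt_div (variance_nonneg _ _) (variance X μ),
    Real.sqrt_div (variance_nonneg _ _) (variance Z μ),
    div_mul_div_comm]
  exact (div_le_div_iff_of_pos_right (mul_pos hsX hsZ)).mpr (hcovXZ ▸ hCS)
end

section
/- Tensorization (Witsenhausen): for independent pairs (W₁ᵢ, W₂ᵢ), i = 1,…,n, the maximal correlation of the tuples satisfies ρₘ(W₁ⁿ, W₂ⁿ) ≤ max_{1≤i≤n} ρₘ(W₁ᵢ, W₂ᵢ), where W_kⁿ = (W_{k,1},…,W_{k,n}). -/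
open MeasureTheory ProbabilityTheory

/-- Hirschfeld–Gebelein–Rényi maximal correlation. -/
noncomputable def maxCorr {Ω β γ : Type*} [MeasurableSpace Ω] [MeasurableSpace β]
    [MeasurableSpace γ] (μ : Measure Ω) (A : Ω → β) (B : Ω → γ) : ℝ :=
  sSup {r : ℝ | ∃ (f : β → ℝ) (g : γ → ℝ), Measurable f ∧ Measurable g ∧
    MemLp (fun ω => f (A ω)) 2 μ ∧ MemLp (fun ω => g (B ω)) 2 μ ∧
    0 < variance (fun ω => f (A ω)) μ ∧ 0 < variance (fun ω => g (B ω)) μ ∧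
    r = corr μ (fun ω => f (A ω)) (fun ω => g (B ω))}

namespace WitsenAux

variable {Ω : Type*} [MeasurableSpace Ω] {μ : Measure Ω}

lemma integrable_mul_of_L2 {X Y : Ω → ℝ} (hX : MemLp X 2 μ) (hY : MemLp Y 2 μ) :
    Integrable (fun ω => X ω * Y ω) μ := by
  have h := (hX.integrable_sq.add hY.integrable_sq).div_const 2
  refine h.mono' (hX.1.mul hY.1) (Filter.Eventually.of_forall fun ω => ?_)
  have : |X ω * Y ω| ≤ (X ω ^ 2 + Y ω ^ 2) / 2 := by
    rw [abs_mul]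
    nlinarith [sq_nonneg (|X ω| - |Y ω|), sq_abs (X ω), sq_abs (Y ω),
      abs_nonneg (X ω), abs_nonneg (Y ω)]
  simpa [Real.norm_eq_abs, abs_mul] using this

lemma integral_mul_le_sqrt {X Y : Ω → ℝ} (hXn : 0 ≤ᵐ[μ] X) (hYn : 0 ≤ᵐ[μ] Y)
    (hX : MemLp X 2 μ) (hY : MemLp Y 2 μ) :
    ∫ ω, X ω * Y ω ∂μ ≤ Real.sqrt (∫ ω, X ω ^ 2 ∂μ) * Real.sqrt (∫ ω, Y ω ^ 2 ∂μ) := by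
  have h2 : ENNReal.ofReal (2 : ℝ) = 2 := by norm_num
  have hpq : (2 : ℝ).HolderConjugate 2 := Real.HolderConjugate.two_two
  have h := integral_mul_le_Lp_mul_Lq_of_nonneg hpq hXn hYn (h2 ▸ hX) (h2 ▸ hY)
  rw [Real.sqrt_eq_rpow, Real.sqrt_eq_rpow]
  simpa [Real.rpow_two] using h

variable [IsProbabilityMeasure μ]

lemma cov_eq_integral_mul {X Y : Ω → ℝ} (hX : MemLp X 2 μ) (hY : MemLp Y 2 μ) :
    cov μ X Y = (∫ ω, X ω * Y ω ∂μ) - (∫ ω, X ω ∂μ) * (∫ ω, Y ω ∂μ) := by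
  have hX1 : Integrable X μ := hX.integrable one_le_two
  have hY1 : Integrable Y μ := hY.integrable one_le_two
  have hXY := integrable_mul_of_L2 hX hY
  have hrw : cov μ X Y = ∫ ω, (X ω * Y ω -
      ((∫ x, X x ∂μ) * Y ω + ((∫ x, Y x ∂μ) * X ω - (∫ x, X x ∂μ) * (∫ x, Y x ∂μ)))) ∂μ := by
    refine integral_congr_ae (Filter.Eventually.of_forall fun ω => ?_)
    ring
  have i1 : Integrable (fun ω => (∫ x, X x ∂μ) * Y ω + ((∫ x, Y x ∂μ) * X ω -
      (∫ x, X x ∂μ) * (∫ x, Y x ∂μ))) μ := by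
    exact (hY1.const_mul _).add ((hX1.const_mul _).sub (integrable_const _))
  have i2 : Integrable (fun ω => (∫ x, Y x ∂μ) * X ω - (∫ x, X x ∂μ) * (∫ x, Y x ∂μ)) μ := by
    exact (hX1.const_mul _).sub (integrable_const _)
  rw [hrw, integral_sub hXY i1, integral_add (hY1.const_mul _) i2,
    integral_sub (hX1.const_mul _) (integrable_const _)]
  simp only [integral_const_mul, integral_const, measure_univ, ENNReal.toReal_one, one_smul,
    smul_eq_mul, probReal_univ]
  ring

lemma variance_eq_sub {X : Ω → ℝ} (hX : MemLp X 2 μ) :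
    variance X μ = (∫ ω, X ω ^ 2 ∂μ) - (∫ ω, X ω ∂μ) ^ 2 := by
  rw [ProbabilityTheory.variance_eq_sub hX]
  rfl

lemma variance_eq_integral_sq {X : Ω → ℝ} (hX : MemLp X 2 μ) :
    variance X μ = ∫ ω, (X ω - ∫ x, X x ∂μ) ^ 2 ∂μ := by
  rw [variance_eq_integral hX.aemeasurable]

end WitsenAux

namespace WitsenAux

variable {Ω : Type*} [MeasurableSpace Ω] {μ : Measure Ω}

section CS
variable [IsProbabilityMeasure μ]

lemma abs_cov_le {X Y : Ω → ℝ} (hX : MemLp X 2 μ) (hY : MemLp Y 2 μ) :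
    |cov μ X Y| ≤ Real.sqrt (variance X μ) * Real.sqrt (variance Y μ) := by
  have hX0 : MemLp (fun ω => X ω - ∫ x, X x ∂μ) 2 μ := hX.sub (memLp_const _)
  have hY0 : MemLp (fun ω => Y ω - ∫ x, Y x ∂μ) 2 μ := hY.sub (memLp_const _)
  have hXa : MemLp (fun ω => |X ω - ∫ x, X x ∂μ|) 2 μ := by
    simpa [Real.norm_eq_abs] using hX0.norm
  have hYa : MemLp (fun ω => |Y ω - ∫ x, Y x ∂μ|) 2 μ := by
    simpa [Real.norm_eq_abs] using hY0.norm
  have h1 : |cov μ X Y| ≤ ∫ ω, |X ω - ∫ x, X x ∂μ| * |Y ω - ∫ x, Y x ∂μ| ∂μ := by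
    have := norm_integral_le_integral_norm (μ := μ)
      (fun ω => (X ω - ∫ x, X x ∂μ) * (Y ω - ∫ x, Y x ∂μ))
    simpa [cov, Real.norm_eq_abs, abs_mul] using this
  have h2 := integral_mul_le_sqrt (X := fun ω => |X ω - ∫ x, X x ∂μ|)
    (Y := fun ω => |Y ω - ∫ x, Y x ∂μ|)
    (Filter.Eventually.of_forall fun ω => abs_nonneg _)
    (Filter.Eventually.of_forall fun ω => abs_nonneg _) hXa hYa
  refine h1.trans (h2.trans_eq ?_)
  rw [variance_eq_integral_sq hX, variance_eq_integral_sq hY]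
  simp [sq_abs]

end CS

/-- The main inductive invariant: every pair of L² test functions of `A` and `B`
has covariance bounded by `ρ` times the product of standard deviations. -/
def CovBound {β γ : Type*} [MeasurableSpace β] [MeasurableSpace γ]
    (μ : Measure Ω) (A : Ω → β) (B : Ω → γ) (ρ : ℝ) : Prop :=
  ∀ u : β → ℝ, ∀ v : γ → ℝ, Measurable u → Measurable v →
    MemLp (fun ω => u (A ω)) 2 μ → MemLp (fun ω => v (B ω)) 2 μ →
    cov μ (fun ω => u (A ω)) (fun ω => v (B ω)) ≤
      ρ * (Real.sqrt (variance (fun ω => u (A ω)) μ) *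
        Real.sqrt (variance (fun ω => v (B ω)) μ))

lemma CovBound.mono {β γ : Type*} [MeasurableSpace β] [MeasurableSpace γ]
    {A : Ω → β} {B : Ω → γ} {ρ ρ' : ℝ} (h : CovBound μ A B ρ) (hρ : ρ ≤ ρ') :
    CovBound μ A B ρ' := fun u v hu hv hU hV =>
  (h u v hu hv hU hV).trans (mul_le_mul_of_nonneg_right hρ (by positivity))

lemma CovBound.comp {β γ β' γ' : Type*} [MeasurableSpace β] [MeasurableSpace γ]
    [MeasurableSpace β'] [MeasurableSpace γ'] {A : Ω → β} {B : Ω → γ} {ρ : ℝ}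
    (h : CovBound μ A B ρ) {φ : β → β'} {ψ : γ → γ'} (hφ : Measurable φ) (hψ : Measurable ψ) :
    CovBound μ (fun ω => φ (A ω)) (fun ω => ψ (B ω)) ρ := fun u v hu hv hU hV =>
  h (fun b => u (φ b)) (fun c => v (ψ c)) (hu.comp hφ) (hv.comp hψ) hU hV

end WitsenAux

namespace WitsenAux

variable {Ω β γ : Type*} [MeasurableSpace Ω] [MeasurableSpace β] [MeasurableSpace γ]
  {μ : Measure Ω} [IsProbabilityMeasure μ] {A : Ω → β} {B : Ω → γ}

lemma maxCorr_set_subset :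
    {r : ℝ | ∃ (f : β → ℝ) (g : γ → ℝ), Measurable f ∧ Measurable g ∧
      MemLp (fun ω => f (A ω)) 2 μ ∧ MemLp (fun ω => g (B ω)) 2 μ ∧
      0 < variance (fun ω => f (A ω)) μ ∧ 0 < variance (fun ω => g (B ω)) μ ∧
      r = corr μ (fun ω => f (A ω)) (fun ω => g (B ω))} ⊆ Set.Iic 1 := by
  rintro r ⟨f, g, hf, hg, hF, hG, hvF, hvG, rfl⟩
  have hd : 0 < Real.sqrt (variance (fun ω => f (A ω)) μ) *
      Real.sqrt (variance (fun ω => g (B ω)) μ) :=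
    mul_pos (Real.sqrt_pos.2 hvF) (Real.sqrt_pos.2 hvG)
  have h1 : corr μ (fun ω => f (A ω)) (fun ω => g (B ω)) ≤
      |cov μ (fun ω => f (A ω)) (fun ω => g (B ω))| /
        (Real.sqrt (variance (fun ω => f (A ω)) μ) *
          Real.sqrt (variance (fun ω => g (B ω)) μ)) := by
    unfold corr
    gcongr
    exact le_abs_self _
  refine Set.mem_Iic.2 (h1.trans ?_)
  rw [div_le_one hd]
  exact abs_cov_le hF hG

lemma maxCorr_bddAbove :
    BddAbove {r : ℝ | ∃ (f : β → ℝ) (g : γ → ℝ), Measurable f ∧ Measurable g ∧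
      MemLp (fun ω => f (A ω)) 2 μ ∧ MemLp (fun ω => g (B ω)) 2 μ ∧
      0 < variance (fun ω => f (A ω)) μ ∧ 0 < variance (fun ω => g (B ω)) μ ∧
      r = corr μ (fun ω => f (A ω)) (fun ω => g (B ω))} :=
  ⟨1, fun _ hr => maxCorr_set_subset hr⟩

lemma maxCorr_nonneg : 0 ≤ maxCorr μ A B := by
  classical
  set S := {r : ℝ | ∃ (f : β → ℝ) (g : γ → ℝ), Measurable f ∧ Measurable g ∧
      MemLp (fun ω => f (A ω)) 2 μ ∧ MemLp (fun ω => g (B ω)) 2 μ ∧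
      0 < variance (fun ω => f (A ω)) μ ∧ 0 < variance (fun ω => g (B ω)) μ ∧
      r = corr μ (fun ω => f (A ω)) (fun ω => g (B ω))} with hS
  rcases Set.eq_empty_or_nonempty S with hemp | ⟨r, hr⟩
  · rw [maxCorr, ← hS, hemp, Real.sSup_empty]
  · have h1 := le_csSup (maxCorr_bddAbove (μ := μ) (A := A) (B := B)) (hS ▸ hr)
    obtain ⟨f, g, hf, hg, hF, hG, hvF, hvG, hr_eq⟩ := hr
    have hFneg : MemLp (fun ω => -f (A ω)) 2 μ := hF.neg
    have hvneg : variance (fun ω => -f (A ω)) μ = variance (fun ω => f (A ω)) μ := by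
      rw [variance_eq_sub hFneg, variance_eq_sub hF, integral_neg]
      simp [neg_sq]
    have hcovneg : cov μ (fun ω => -f (A ω)) (fun ω => g (B ω)) =
        -cov μ (fun ω => f (A ω)) (fun ω => g (B ω)) := by
      unfold cov
      rw [← integral_neg]
      refine integral_congr_ae (Filter.Eventually.of_forall fun ω => ?_)
      rw [integral_neg]
      ring
    have hneg : -r ∈ S := by
      refine ⟨fun b => -f b, g, hf.neg, hg, hF.neg, hG, ?_, hvG, ?_⟩
      · rw [hvneg]; exact hvF
      · rw [hr_eq]
        unfold corr
        rw [hcovneg, hvneg, neg_div]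
    have hb : BddAbove S := maxCorr_bddAbove
    have h2 := le_csSup hb hneg
    rw [maxCorr, ← hS]
    linarith

lemma maxCorr_covBound (hA : Measurable A) (hB : Measurable B) :
    CovBound μ A B (maxCorr μ A B) := by
  intro u v hu hv hU hV
  by_cases hvu : variance (fun ω => u (A ω)) μ = 0
  · have hev : evariance (fun ω => u (A ω)) μ = 0 := by
      rw [← ofReal_variance hU, hvu, ENNReal.ofReal_zero]
    have hae := (evariance_eq_zero_iff (hu.comp hA).aemeasurable).1 hev
    have hcov : cov μ (fun ω => u (A ω)) (fun ω => v (B ω)) = 0 := by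
      unfold cov
      rw [← integral_zero Ω ℝ]
      refine integral_congr_ae ?_
      filter_upwards [hae] with ω hω
      have hω' : u (A ω) = ∫ x, u (A x) ∂μ := hω
      rw [hω']
      simp
    rw [hcov, hvu]
    simp
  by_cases hvv : variance (fun ω => v (B ω)) μ = 0
  · have hev : evariance (fun ω => v (B ω)) μ = 0 := by
      rw [← ofReal_variance hV, hvv, ENNReal.ofReal_zero]
    have hae := (evariance_eq_zero_iff (hv.comp hB).aemeasurable).1 hev
    have hcov : cov μ (fun ω => u (A ω)) (fun ω => v (B ω)) = 0 := by
      unfold cov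
      rw [← integral_zero Ω ℝ]
      refine integral_congr_ae ?_
      filter_upwards [hae] with ω hω
      have hω' : v (B ω) = ∫ x, v (B x) ∂μ := hω
      rw [hω']
      simp
    rw [hcov, hvv]
    simp
  · have hvF : 0 < variance (fun ω => u (A ω)) μ := (variance_nonneg _ _).lt_of_ne' hvu
    have hvG : 0 < variance (fun ω => v (B ω)) μ := (variance_nonneg _ _).lt_of_ne' hvv
    have hmem : corr μ (fun ω => u (A ω)) (fun ω => v (B ω)) ∈
        {r : ℝ | ∃ (f : β → ℝ) (g : γ → ℝ), Measurable f ∧ Measurable g ∧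
          MemLp (fun ω => f (A ω)) 2 μ ∧ MemLp (fun ω => g (B ω)) 2 μ ∧
          0 < variance (fun ω => f (A ω)) μ ∧ 0 < variance (fun ω => g (B ω)) μ ∧
          r = corr μ (fun ω => f (A ω)) (fun ω => g (B ω))} :=
      ⟨u, v, hu, hv, hU, hV, hvF, hvG, rfl⟩
    have h1 : corr μ (fun ω => u (A ω)) (fun ω => v (B ω)) ≤ maxCorr μ A B :=
      le_csSup maxCorr_bddAbove hmem
    have hd : 0 < Real.sqrt (variance (fun ω => u (A ω)) μ) *
        Real.sqrt (variance (fun ω => v (B ω)) μ) :=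
      mul_pos (Real.sqrt_pos.2 hvF) (Real.sqrt_pos.2 hvG)
    have hco : cov μ (fun ω => u (A ω)) (fun ω => v (B ω)) =
        corr μ (fun ω => u (A ω)) (fun ω => v (B ω)) *
          (Real.sqrt (variance (fun ω => u (A ω)) μ) *
            Real.sqrt (variance (fun ω => v (B ω)) μ)) := by
      unfold corr
      rw [div_mul_cancel₀ _ hd.ne']
    rw [hco]
    exact mul_le_mul_of_nonneg_right h1 hd.le

end WitsenAux

namespace WitsenAux

variable {Ω : Type*} [MeasurableSpace Ω] {μ : Measure Ω}

lemma cov_map {Δ : Type*} [MeasurableSpace Δ] {R : Ω → Δ} (hR : Measurable R)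
    {X Y : Δ → ℝ} (hX : Measurable X) (hY : Measurable Y) :
    cov (μ.map R) X Y = cov μ (fun ω => X (R ω)) (fun ω => Y (R ω)) := by
  have h1 : ∫ x, X x ∂(μ.map R) = ∫ ω, X (R ω) ∂μ :=
    integral_map hR.aemeasurable hX.aestronglyMeasurable
  have h2 : ∫ x, Y x ∂(μ.map R) = ∫ ω, Y (R ω) ∂μ :=
    integral_map hR.aemeasurable hY.aestronglyMeasurable
  rw [cov, cov, h1, h2,
    integral_map (f := fun δ => (X δ - ∫ ω, X (R ω) ∂μ) * (Y δ - ∫ ω, Y (R ω) ∂μ))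
      hR.aemeasurable (((hX.sub measurable_const).mul
      (hY.sub measurable_const)).aestronglyMeasurable)]

lemma variance_map {Δ : Type*} [MeasurableSpace Δ] {R : Ω → Δ} (hR : Measurable R)
    {X : Δ → ℝ} (hX : Measurable X) :
    variance X (μ.map R) = variance (fun ω => X (R ω)) μ := by
  have : IdentDistrib (fun ω => X (R ω)) X μ (μ.map R) :=
    ⟨(hX.comp hR).aemeasurable, hX.aemeasurable, by rw [Measure.map_map hX hR]; rfl⟩
  exact (this.variance_eq).symm

lemma covBound_map_iff {Δ β γ : Type*} [MeasurableSpace Δ] [MeasurableSpace β]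
    [MeasurableSpace γ] {R : Ω → Δ} (hR : Measurable R) {A : Δ → β} {B : Δ → γ}
    (hA : Measurable A) (hB : Measurable B) {ρ : ℝ} :
    CovBound (μ.map R) A B ρ ↔ CovBound μ (fun ω => A (R ω)) (fun ω => B (R ω)) ρ := by
  constructor
  · intro h u v hu hv hU hV
    have hU' : MemLp (fun δ => u (A δ)) 2 (μ.map R) :=
      (memLp_map_measure_iff (hu.comp hA).aestronglyMeasurable hR.aemeasurable).2 hU
    have hV' : MemLp (fun δ => v (B δ)) 2 (μ.map R) :=
      (memLp_map_measure_iff (hv.comp hB).aestronglyMeasurable hR.aemeasurable).2 hV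
    have := h u v hu hv hU' hV'
    have e1 : cov (μ.map R) (fun δ => u (A δ)) (fun δ => v (B δ)) =
        cov μ (fun ω => u (A (R ω))) (fun ω => v (B (R ω))) :=
      cov_map hR (hu.comp hA) (hv.comp hB)
    have e2 : variance (fun δ => u (A δ)) (μ.map R) =
        variance (fun ω => u (A (R ω))) μ := variance_map hR (hu.comp hA)
    have e3 : variance (fun δ => v (B δ)) (μ.map R) =
        variance (fun ω => v (B (R ω))) μ := variance_map hR (hv.comp hB)
    rw [e1, e2, e3] at this
    exact this
  · intro h u v hu hv hU hV
    have hU' : MemLp (fun ω => u (A (R ω))) 2 μ :=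
      (memLp_map_measure_iff (hu.comp hA).aestronglyMeasurable hR.aemeasurable).1 hU
    have hV' : MemLp (fun ω => v (B (R ω))) 2 μ :=
      (memLp_map_measure_iff (hv.comp hB).aestronglyMeasurable hR.aemeasurable).1 hV
    have := h u v hu hv hU' hV'
    have e1 : cov (μ.map R) (fun δ => u (A δ)) (fun δ => v (B δ)) =
        cov μ (fun ω => u (A (R ω))) (fun ω => v (B (R ω))) :=
      cov_map hR (hu.comp hA) (hv.comp hB)
    have e2 : variance (fun δ => u (A δ)) (μ.map R) =
        variance (fun ω => u (A (R ω))) μ := variance_map hR (hu.comp hA)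
    have e3 : variance (fun δ => v (B δ)) (μ.map R) =
        variance (fun ω => v (B (R ω))) μ := variance_map hR (hv.comp hB)
    rw [← e1, ← e2, ← e3] at this
    exact this

lemma sqrt_key {a b A B : ℝ} (ha : 0 ≤ a) (hb : 0 ≤ b) (hA : a ≤ A) (hB : b ≤ B) :
    Real.sqrt (A - a) * Real.sqrt (B - b) + Real.sqrt a * Real.sqrt b ≤
      Real.sqrt A * Real.sqrt B := by
  have hA0 : 0 ≤ A := ha.trans hA
  have hB0 : 0 ≤ B := hb.trans hB
  have hAa : (0:ℝ) ≤ A - a := by linarith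
  have hBb : (0:ℝ) ≤ B - b := by linarith
  have hq1 : 0 ≤ a * (B - b) := mul_nonneg ha hBb
  have hq2 : 0 ≤ b * (A - a) := mul_nonneg hb hAa
  rw [← Real.sqrt_mul hAa (B - b), ← Real.sqrt_mul ha b, ← Real.sqrt_mul hA0 B]
  have key : Real.sqrt ((A - a) * (B - b)) * Real.sqrt (a * b) ≤
      (a * (B - b) + b * (A - a)) / 2 := by
    rw [← Real.sqrt_mul (mul_nonneg hAa hBb) (a * b)]
    have h1 : Real.sqrt ((A - a) * (B - b) * (a * b)) ≤
        Real.sqrt (((a * (B - b) + b * (A - a)) / 2) ^ 2) := by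
      apply Real.sqrt_le_sqrt
      nlinarith [sq_nonneg (a * (B - b) - b * (A - a))]
    rwa [Real.sqrt_sq (by linarith)] at h1
  have hmain : (Real.sqrt ((A - a) * (B - b)) + Real.sqrt (a * b)) ^ 2 ≤ A * B := by
    rw [add_sq, Real.sq_sqrt (mul_nonneg hAa hBb), Real.sq_sqrt (mul_nonneg ha hb)]
    nlinarith [key]
  have := Real.sqrt_le_sqrt hmain
  rwa [Real.sqrt_sq (by positivity)] at this

end WitsenAux

namespace WitsenAux

set_option maxHeartbeats 1000000 in
lemma core_prod {β γ β' γ' : Type*} [MeasurableSpace β] [MeasurableSpace γ]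
    [MeasurableSpace β'] [MeasurableSpace γ']
    {ν : Measure (β × γ)} {κ : Measure (β' × γ')}
    [IsProbabilityMeasure ν] [IsProbabilityMeasure κ] {ρ : ℝ} (hρ : 0 ≤ ρ)
    (H1 : CovBound ν Prod.fst Prod.snd ρ) (H2 : CovBound κ Prod.fst Prod.snd ρ) :
    CovBound (ν.prod κ) (fun p => (p.1.1, p.2.1)) (fun p => (p.1.2, p.2.2)) ρ := by
  intro f g hf hg hF hG
  have hF' : MemLp (fun p : (β × γ) × (β' × γ') => f (p.1.1, p.2.1)) 2 (ν.prod κ) := hF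
  have hG' : MemLp (fun p : (β × γ) × (β' × γ') => g (p.1.2, p.2.2)) 2 (ν.prod κ) := hG
  -- measurability
  have hFm : Measurable fun p : (β × γ) × (β' × γ') => f (p.1.1, p.2.1) :=
    hf.comp ((measurable_fst.comp measurable_fst).prodMk (measurable_fst.comp measurable_snd))
  have hGm : Measurable fun p : (β × γ) × (β' × γ') => g (p.1.2, p.2.2) :=
    hg.comp ((measurable_snd.comp measurable_fst).prodMk (measurable_snd.comp measurable_snd))
  -- integrabilities on the product
  have hF2 : Integrable (fun p : (β × γ) × (β' × γ') => f (p.1.1, p.2.1) ^ 2) (ν.prod κ) :=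
    hF'.integrable_sq
  have hG2 : Integrable (fun p : (β × γ) × (β' × γ') => g (p.1.2, p.2.2) ^ 2) (ν.prod κ) :=
    hG'.integrable_sq
  have hFG : Integrable (fun p : (β × γ) × (β' × γ') =>
      f (p.1.1, p.2.1) * g (p.1.2, p.2.2)) (ν.prod κ) := integrable_mul_of_L2 hF' hG'
  have hF1 : Integrable (fun p : (β × γ) × (β' × γ') => f (p.1.1, p.2.1)) (ν.prod κ) :=
    hF'.integrable one_le_two
  have hG1 : Integrable (fun p : (β × γ) × (β' × γ') => g (p.1.2, p.2.2)) (ν.prod κ) :=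
    hG'.integrable one_le_two
  -- marginal functions and their measurability
  have hum : Measurable fun b : β' => ∫ p : β × γ, f (p.1, b) ∂ν :=
    (StronglyMeasurable.integral_prod_left'
      (f := fun z : (β × γ) × β' => f (z.1.1, z.2))
      (hf.comp ((measurable_fst.comp measurable_fst).prodMk
        measurable_snd)).stronglyMeasurable).measurable
  have hvm : Measurable fun c : γ' => ∫ p : β × γ, g (p.2, c) ∂ν :=
    (StronglyMeasurable.integral_prod_left'
      (f := fun z : (β × γ) × γ' => g (z.1.2, z.2))
      (hg.comp ((measurable_snd.comp measurable_fst).prodMk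
        measurable_snd)).stronglyMeasurable).measurable
  have hsm : Measurable fun b : β' => ∫ p : β × γ, f (p.1, b) ^ 2 ∂ν :=
    (StronglyMeasurable.integral_prod_left'
      (f := fun z : (β × γ) × β' => f (z.1.1, z.2) ^ 2)
      ((hf.comp ((measurable_fst.comp measurable_fst).prodMk
        measurable_snd)).pow_const 2).stronglyMeasurable).measurable
  have htm : Measurable fun c : γ' => ∫ p : β × γ, g (p.2, c) ^ 2 ∂ν :=
    (StronglyMeasurable.integral_prod_left'
      (f := fun z : (β × γ) × γ' => g (z.1.2, z.2) ^ 2)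
      ((hg.comp ((measurable_snd.comp measurable_fst).prodMk
        measurable_snd)).pow_const 2).stronglyMeasurable).measurable
  -- integrability of marginals over κ
  have hsI : Integrable (fun q : β' × γ' => ∫ p : β × γ, f (p.1, q.1) ^ 2 ∂ν) κ :=
    hF2.integral_prod_right
  have htI : Integrable (fun q : β' × γ' => ∫ p : β × γ, g (p.2, q.2) ^ 2 ∂ν) κ :=
    hG2.integral_prod_right
  have hII : Integrable (fun q : β' × γ' =>
      ∫ p : β × γ, f (p.1, q.1) * g (p.2, q.2) ∂ν) κ := hFG.integral_prod_right
  -- Fubini identities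
  have hIeq : ∫ p : (β × γ) × (β' × γ'), f (p.1.1, p.2.1) * g (p.1.2, p.2.2) ∂(ν.prod κ) =
      ∫ q : β' × γ', (∫ p : β × γ, f (p.1, q.1) * g (p.2, q.2) ∂ν) ∂κ :=
    integral_prod_symm _ hFG
  have hF2eq : ∫ p : (β × γ) × (β' × γ'), f (p.1.1, p.2.1) ^ 2 ∂(ν.prod κ) =
      ∫ q : β' × γ', (∫ p : β × γ, f (p.1, q.1) ^ 2 ∂ν) ∂κ := integral_prod_symm _ hF2
  have hG2eq : ∫ p : (β × γ) × (β' × γ'), g (p.1.2, p.2.2) ^ 2 ∂(ν.prod κ) =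
      ∫ q : β' × γ', (∫ p : β × γ, g (p.2, q.2) ^ 2 ∂ν) ∂κ := integral_prod_symm _ hG2
  have hFeq : ∫ p : (β × γ) × (β' × γ'), f (p.1.1, p.2.1) ∂(ν.prod κ) =
      ∫ q : β' × γ', (∫ p : β × γ, f (p.1, q.1) ∂ν) ∂κ := integral_prod_symm _ hF1
  have hGeq : ∫ p : (β × γ) × (β' × γ'), g (p.1.2, p.2.2) ∂(ν.prod κ) =
      ∫ q : β' × γ', (∫ p : β × γ, g (p.2, q.2) ∂ν) ∂κ := integral_prod_symm _ hG1
  -- a.e. slice facts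
  have hae_f2 : ∀ᵐ q ∂κ, Integrable (fun p : β × γ => f (p.1, q.1) ^ 2) ν := hF2.prod_left_ae
  have hae_g2 : ∀ᵐ q ∂κ, Integrable (fun p : β × γ => g (p.2, q.2) ^ 2) ν := hG2.prod_left_ae
  have hae_fg : ∀ᵐ q ∂κ, Integrable (fun p : β × γ =>
      f (p.1, q.1) * g (p.2, q.2)) ν := hFG.prod_left_ae
  -- the conditional covariance bound, a.e. in q
  have hmain : ∀ᵐ q ∂κ,
      ((∫ p : β × γ, f (p.1, q.1) * g (p.2, q.2) ∂ν) ≤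
        ρ * (Real.sqrt ((∫ p : β × γ, f (p.1, q.1) ^ 2 ∂ν) -
              (∫ p : β × γ, f (p.1, q.1) ∂ν) ^ 2) *
            Real.sqrt ((∫ p : β × γ, g (p.2, q.2) ^ 2 ∂ν) -
              (∫ p : β × γ, g (p.2, q.2) ∂ν) ^ 2)) +
          (∫ p : β × γ, f (p.1, q.1) ∂ν) * (∫ p : β × γ, g (p.2, q.2) ∂ν)) ∧
      0 ≤ (∫ p : β × γ, f (p.1, q.1) ^ 2 ∂ν) - (∫ p : β × γ, f (p.1, q.1) ∂ν) ^ 2 ∧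
      0 ≤ (∫ p : β × γ, g (p.2, q.2) ^ 2 ∂ν) - (∫ p : β × γ, g (p.2, q.2) ∂ν) ^ 2 := by
    filter_upwards [hae_f2, hae_g2, hae_fg] with q h1 h2 h3
    have hfs : MemLp (fun p : β × γ => f (p.1, q.1)) 2 ν :=
      (memLp_two_iff_integrable_sq
        (hf.comp (measurable_fst.prodMk measurable_const)).aestronglyMeasurable).2 h1
    have hgs : MemLp (fun p : β × γ => g (p.2, q.2)) 2 ν :=
      (memLp_two_iff_integrable_sq
        (hg.comp (measurable_snd.prodMk measurable_const)).aestronglyMeasurable).2 h2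
    have hcb : cov ν (fun p : β × γ => f (p.1, q.1)) (fun p : β × γ => g (p.2, q.2)) ≤
        ρ * (Real.sqrt (variance (fun p : β × γ => f (p.1, q.1)) ν) *
          Real.sqrt (variance (fun p : β × γ => g (p.2, q.2)) ν)) :=
      H1 (fun a => f (a, q.1)) (fun c => g (c, q.2))
        (hf.comp (measurable_id.prodMk measurable_const))
        (hg.comp (measurable_id.prodMk measurable_const)) hfs hgs
    have hcov : cov ν (fun p : β × γ => f (p.1, q.1)) (fun p : β × γ => g (p.2, q.2)) =
        (∫ p : β × γ, f (p.1, q.1) * g (p.2, q.2) ∂ν) -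
          (∫ p : β × γ, f (p.1, q.1) ∂ν) * (∫ p : β × γ, g (p.2, q.2) ∂ν) :=
      cov_eq_integral_mul hfs hgs
    have hvf : variance (fun p : β × γ => f (p.1, q.1)) ν =
        (∫ p : β × γ, f (p.1, q.1) ^ 2 ∂ν) - (∫ p : β × γ, f (p.1, q.1) ∂ν) ^ 2 :=
      variance_eq_sub hfs
    have hvg : variance (fun p : β × γ => g (p.2, q.2)) ν =
        (∫ p : β × γ, g (p.2, q.2) ^ 2 ∂ν) - (∫ p : β × γ, g (p.2, q.2) ∂ν) ^ 2 :=
      variance_eq_sub hgs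
    refine ⟨?_, ?_, ?_⟩
    · rw [hcov, hvf, hvg] at hcb
      linarith
    · exact hvf ▸ variance_nonneg _ ν
    · exact hvg ▸ variance_nonneg _ ν
  -- square-integrability of the means over κ
  have hu2I : Integrable (fun q : β' × γ' => (∫ p : β × γ, f (p.1, q.1) ∂ν) ^ 2) κ := by
    refine hsI.mono' ((hum.comp measurable_fst).pow_const 2).aestronglyMeasurable ?_
    filter_upwards [hmain] with q hq
    rw [Real.norm_eq_abs, abs_of_nonneg (sq_nonneg _)]
    linarith [hq.2.1]
  have hv2I : Integrable (fun q : β' × γ' => (∫ p : β × γ, g (p.2, q.2) ∂ν) ^ 2) κ := by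
    refine htI.mono' ((hvm.comp measurable_snd).pow_const 2).aestronglyMeasurable ?_
    filter_upwards [hmain] with q hq
    rw [Real.norm_eq_abs, abs_of_nonneg (sq_nonneg _)]
    linarith [hq.2.2]
  have hu2 : MemLp (fun q : β' × γ' => ∫ p : β × γ, f (p.1, q.1) ∂ν) 2 κ :=
    (memLp_two_iff_integrable_sq (hum.comp measurable_fst).aestronglyMeasurable).2 hu2I
  have hv2 : MemLp (fun q : β' × γ' => ∫ p : β × γ, g (p.2, q.2) ∂ν) 2 κ :=
    (memLp_two_iff_integrable_sq (hvm.comp measurable_snd).aestronglyMeasurable).2 hv2I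
  -- the conditional standard deviations
  have hσm : Measurable (fun q : β' × γ' => Real.sqrt ((∫ p : β × γ, f (p.1, q.1) ^ 2 ∂ν) -
      (∫ p : β × γ, f (p.1, q.1) ∂ν) ^ 2)) :=
    ((hsm.comp measurable_fst).sub ((hum.comp measurable_fst).pow_const 2)).sqrt
  have hτm : Measurable (fun q : β' × γ' => Real.sqrt ((∫ p : β × γ, g (p.2, q.2) ^ 2 ∂ν) -
      (∫ p : β × γ, g (p.2, q.2) ∂ν) ^ 2)) :=
    ((htm.comp measurable_snd).sub ((hvm.comp measurable_snd).pow_const 2)).sqrt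
  have hsqle : ∀ x : ℝ, Real.sqrt x ^ 2 ≤ |x| := by
    intro x
    rcases le_or_gt 0 x with h | h
    · rw [Real.sq_sqrt h]; exact le_abs_self x
    · rw [Real.sqrt_eq_zero'.2 h.le]
      simpa using abs_nonneg x
  have hσ2I : Integrable (fun q : β' × γ' => Real.sqrt ((∫ p : β × γ, f (p.1, q.1) ^ 2 ∂ν) -
      (∫ p : β × γ, f (p.1, q.1) ∂ν) ^ 2) ^ 2) κ := by
    have hsum : Integrable (fun q : β' × γ' => (∫ p : β × γ, f (p.1, q.1) ^ 2 ∂ν) +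
        (∫ p : β × γ, f (p.1, q.1) ∂ν) ^ 2) κ := hsI.add hu2I
    refine hsum.mono' (hσm.pow_const 2).aestronglyMeasurable
      (Filter.Eventually.of_forall fun q => ?_)
    rw [Real.norm_eq_abs, abs_of_nonneg (sq_nonneg _)]
    refine (hsqle _).trans ?_
    have h0 : 0 ≤ ∫ p : β × γ, f (p.1, q.1) ^ 2 ∂ν :=
      integral_nonneg fun p => sq_nonneg _
    rw [abs_le]
    constructor <;> nlinarith [sq_nonneg (∫ p : β × γ, f (p.1, q.1) ∂ν)]
  have hτ2I : Integrable (fun q : β' × γ' => Real.sqrt ((∫ p : β × γ, g (p.2, q.2) ^ 2 ∂ν) -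
      (∫ p : β × γ, g (p.2, q.2) ∂ν) ^ 2) ^ 2) κ := by
    have hsum : Integrable (fun q : β' × γ' => (∫ p : β × γ, g (p.2, q.2) ^ 2 ∂ν) +
        (∫ p : β × γ, g (p.2, q.2) ∂ν) ^ 2) κ := htI.add hv2I
    refine hsum.mono' (hτm.pow_const 2).aestronglyMeasurable
      (Filter.Eventually.of_forall fun q => ?_)
    rw [Real.norm_eq_abs, abs_of_nonneg (sq_nonneg _)]
    refine (hsqle _).trans ?_
    have h0 : 0 ≤ ∫ p : β × γ, g (p.2, q.2) ^ 2 ∂ν :=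
      integral_nonneg fun p => sq_nonneg _
    rw [abs_le]
    constructor <;> nlinarith [sq_nonneg (∫ p : β × γ, g (p.2, q.2) ∂ν)]
  have hσ2 : MemLp (fun q : β' × γ' => Real.sqrt ((∫ p : β × γ, f (p.1, q.1) ^ 2 ∂ν) -
      (∫ p : β × γ, f (p.1, q.1) ∂ν) ^ 2)) 2 κ :=
    (memLp_two_iff_integrable_sq hσm.aestronglyMeasurable).2 hσ2I
  have hτ2 : MemLp (fun q : β' × γ' => Real.sqrt ((∫ p : β × γ, g (p.2, q.2) ^ 2 ∂ν) -
      (∫ p : β × γ, g (p.2, q.2) ∂ν) ^ 2)) 2 κ :=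
    (memLp_two_iff_integrable_sq hτm.aestronglyMeasurable).2 hτ2I
  have hστI : Integrable (fun q : β' × γ' =>
      Real.sqrt ((∫ p : β × γ, f (p.1, q.1) ^ 2 ∂ν) -
        (∫ p : β × γ, f (p.1, q.1) ∂ν) ^ 2) *
      Real.sqrt ((∫ p : β × γ, g (p.2, q.2) ^ 2 ∂ν) -
        (∫ p : β × γ, g (p.2, q.2) ∂ν) ^ 2)) κ := integrable_mul_of_L2 hσ2 hτ2
  have huvI : Integrable (fun q : β' × γ' =>
      (∫ p : β × γ, f (p.1, q.1) ∂ν) * (∫ p : β × γ, g (p.2, q.2) ∂ν)) κ :=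
    integrable_mul_of_L2 hu2 hv2
  have hsumI : Integrable (fun q : β' × γ' =>
      ρ * (Real.sqrt ((∫ p : β × γ, f (p.1, q.1) ^ 2 ∂ν) -
            (∫ p : β × γ, f (p.1, q.1) ∂ν) ^ 2) *
          Real.sqrt ((∫ p : β × γ, g (p.2, q.2) ^ 2 ∂ν) -
            (∫ p : β × γ, g (p.2, q.2) ∂ν) ^ 2)) +
        (∫ p : β × γ, f (p.1, q.1) ∂ν) * (∫ p : β × γ, g (p.2, q.2) ∂ν)) κ :=
    (hστI.const_mul ρ).add huvI
  -- integrate the conditional bound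
  have hstep1 : (∫ q : β' × γ', (∫ p : β × γ, f (p.1, q.1) * g (p.2, q.2) ∂ν) ∂κ) ≤
      ∫ q : β' × γ',
        (ρ * (Real.sqrt ((∫ p : β × γ, f (p.1, q.1) ^ 2 ∂ν) -
              (∫ p : β × γ, f (p.1, q.1) ∂ν) ^ 2) *
            Real.sqrt ((∫ p : β × γ, g (p.2, q.2) ^ 2 ∂ν) -
              (∫ p : β × γ, g (p.2, q.2) ∂ν) ^ 2)) +
          (∫ p : β × γ, f (p.1, q.1) ∂ν) * (∫ p : β × γ, g (p.2, q.2) ∂ν)) ∂κ := by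
    refine integral_mono_ae hII hsumI ?_
    filter_upwards [hmain] with q hq
    exact hq.1
  have hstep2 : ∫ q : β' × γ',
        (ρ * (Real.sqrt ((∫ p : β × γ, f (p.1, q.1) ^ 2 ∂ν) -
              (∫ p : β × γ, f (p.1, q.1) ∂ν) ^ 2) *
            Real.sqrt ((∫ p : β × γ, g (p.2, q.2) ^ 2 ∂ν) -
              (∫ p : β × γ, g (p.2, q.2) ∂ν) ^ 2)) +
          (∫ p : β × γ, f (p.1, q.1) ∂ν) * (∫ p : β × γ, g (p.2, q.2) ∂ν)) ∂κ =
      ρ * (∫ q : β' × γ',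
          (Real.sqrt ((∫ p : β × γ, f (p.1, q.1) ^ 2 ∂ν) -
              (∫ p : β × γ, f (p.1, q.1) ∂ν) ^ 2) *
            Real.sqrt ((∫ p : β × γ, g (p.2, q.2) ^ 2 ∂ν) -
              (∫ p : β × γ, g (p.2, q.2) ∂ν) ^ 2)) ∂κ) +
        ∫ q : β' × γ', (∫ p : β × γ, f (p.1, q.1) ∂ν) * (∫ p : β × γ, g (p.2, q.2) ∂ν) ∂κ := by
    rw [integral_add (hστI.const_mul ρ) huvI, integral_const_mul]
  -- Cauchy–Schwarz for the conditional standard deviations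
  have hHol : (∫ q : β' × γ',
        (Real.sqrt ((∫ p : β × γ, f (p.1, q.1) ^ 2 ∂ν) -
            (∫ p : β × γ, f (p.1, q.1) ∂ν) ^ 2) *
          Real.sqrt ((∫ p : β × γ, g (p.2, q.2) ^ 2 ∂ν) -
            (∫ p : β × γ, g (p.2, q.2) ∂ν) ^ 2)) ∂κ) ≤
      Real.sqrt (∫ q : β' × γ', Real.sqrt ((∫ p : β × γ, f (p.1, q.1) ^ 2 ∂ν) -
          (∫ p : β × γ, f (p.1, q.1) ∂ν) ^ 2) ^ 2 ∂κ) *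
      Real.sqrt (∫ q : β' × γ', Real.sqrt ((∫ p : β × γ, g (p.2, q.2) ^ 2 ∂ν) -
          (∫ p : β × γ, g (p.2, q.2) ∂ν) ^ 2) ^ 2 ∂κ) :=
    integral_mul_le_sqrt (Filter.Eventually.of_forall fun q => Real.sqrt_nonneg _)
      (Filter.Eventually.of_forall fun q => Real.sqrt_nonneg _) hσ2 hτ2
  -- identify ∫ σ² and ∫ τ²
  have hσsq : ∫ q : β' × γ', Real.sqrt ((∫ p : β × γ, f (p.1, q.1) ^ 2 ∂ν) -
        (∫ p : β × γ, f (p.1, q.1) ∂ν) ^ 2) ^ 2 ∂κ =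
      ∫ q : β' × γ', ((∫ p : β × γ, f (p.1, q.1) ^ 2 ∂ν) -
        (∫ p : β × γ, f (p.1, q.1) ∂ν) ^ 2) ∂κ := by
    refine integral_congr_ae ?_
    filter_upwards [hmain] with q hq
    rw [Real.sq_sqrt hq.2.1]
  have hτsq : ∫ q : β' × γ', Real.sqrt ((∫ p : β × γ, g (p.2, q.2) ^ 2 ∂ν) -
        (∫ p : β × γ, g (p.2, q.2) ∂ν) ^ 2) ^ 2 ∂κ =
      ∫ q : β' × γ', ((∫ p : β × γ, g (p.2, q.2) ^ 2 ∂ν) -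
        (∫ p : β × γ, g (p.2, q.2) ∂ν) ^ 2) ∂κ := by
    refine integral_congr_ae ?_
    filter_upwards [hmain] with q hq
    rw [Real.sq_sqrt hq.2.2]
  have hσsplit : ∫ q : β' × γ', ((∫ p : β × γ, f (p.1, q.1) ^ 2 ∂ν) -
        (∫ p : β × γ, f (p.1, q.1) ∂ν) ^ 2) ∂κ =
      (∫ q : β' × γ', (∫ p : β × γ, f (p.1, q.1) ^ 2 ∂ν) ∂κ) -
        ∫ q : β' × γ', (∫ p : β × γ, f (p.1, q.1) ∂ν) ^ 2 ∂κ := integral_sub hsI hu2I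
  have hτsplit : ∫ q : β' × γ', ((∫ p : β × γ, g (p.2, q.2) ^ 2 ∂ν) -
        (∫ p : β × γ, g (p.2, q.2) ∂ν) ^ 2) ∂κ =
      (∫ q : β' × γ', (∫ p : β × γ, g (p.2, q.2) ^ 2 ∂ν) ∂κ) -
        ∫ q : β' × γ', (∫ p : β × γ, g (p.2, q.2) ∂ν) ^ 2 ∂κ := integral_sub htI hv2I
  -- variances
  have hVF : variance (fun p : (β × γ) × (β' × γ') => f (p.1.1, p.2.1)) (ν.prod κ) =
      (∫ p : (β × γ) × (β' × γ'), f (p.1.1, p.2.1) ^ 2 ∂(ν.prod κ)) -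
        (∫ p : (β × γ) × (β' × γ'), f (p.1.1, p.2.1) ∂(ν.prod κ)) ^ 2 := variance_eq_sub hF'
  have hVG : variance (fun p : (β × γ) × (β' × γ') => g (p.1.2, p.2.2)) (ν.prod κ) =
      (∫ p : (β × γ) × (β' × γ'), g (p.1.2, p.2.2) ^ 2 ∂(ν.prod κ)) -
        (∫ p : (β × γ) × (β' × γ'), g (p.1.2, p.2.2) ∂(ν.prod κ)) ^ 2 := variance_eq_sub hG'
  have hA : variance (fun q : β' × γ' => ∫ p : β × γ, f (p.1, q.1) ∂ν) κ =
      (∫ q : β' × γ', (∫ p : β × γ, f (p.1, q.1) ∂ν) ^ 2 ∂κ) -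
        (∫ q : β' × γ', (∫ p : β × γ, f (p.1, q.1) ∂ν) ∂κ) ^ 2 := variance_eq_sub hu2
  have hB : variance (fun q : β' × γ' => ∫ p : β × γ, g (p.2, q.2) ∂ν) κ =
      (∫ q : β' × γ', (∫ p : β × γ, g (p.2, q.2) ∂ν) ^ 2 ∂κ) -
        (∫ q : β' × γ', (∫ p : β × γ, g (p.2, q.2) ∂ν) ∂κ) ^ 2 := variance_eq_sub hv2
  -- apply H2 to the conditional means
  have hcb2 : cov κ (fun q : β' × γ' => ∫ p : β × γ, f (p.1, q.1) ∂ν)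
        (fun q : β' × γ' => ∫ p : β × γ, g (p.2, q.2) ∂ν) ≤
      ρ * (Real.sqrt (variance (fun q : β' × γ' => ∫ p : β × γ, f (p.1, q.1) ∂ν) κ) *
        Real.sqrt (variance (fun q : β' × γ' => ∫ p : β × γ, g (p.2, q.2) ∂ν) κ)) :=
    H2 (fun b => ∫ p : β × γ, f (p.1, b) ∂ν) (fun c => ∫ p : β × γ, g (p.2, c) ∂ν)
      hum hvm hu2 hv2
  have hcovκ : cov κ (fun q : β' × γ' => ∫ p : β × γ, f (p.1, q.1) ∂ν)
        (fun q : β' × γ' => ∫ p : β × γ, g (p.2, q.2) ∂ν) =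
      (∫ q : β' × γ', (∫ p : β × γ, f (p.1, q.1) ∂ν) * (∫ p : β × γ, g (p.2, q.2) ∂ν) ∂κ) -
        (∫ q : β' × γ', (∫ p : β × γ, f (p.1, q.1) ∂ν) ∂κ) *
          (∫ q : β' × γ', (∫ p : β × γ, g (p.2, q.2) ∂ν) ∂κ) := cov_eq_integral_mul hu2 hv2
  -- covariance of F and G
  have hcovπ : cov (ν.prod κ) (fun p : (β × γ) × (β' × γ') => f (p.1.1, p.2.1))
        (fun p : (β × γ) × (β' × γ') => g (p.1.2, p.2.2)) =
      (∫ p : (β × γ) × (β' × γ'), f (p.1.1, p.2.1) * g (p.1.2, p.2.2) ∂(ν.prod κ)) -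
        (∫ p : (β × γ) × (β' × γ'), f (p.1.1, p.2.1) ∂(ν.prod κ)) *
          (∫ p : (β × γ) × (β' × γ'), g (p.1.2, p.2.2) ∂(ν.prod κ)) :=
    cov_eq_integral_mul hF' hG'
  -- abbreviations as equalities between the numbers
  have haA : 0 ≤ variance (fun q : β' × γ' => ∫ p : β × γ, f (p.1, q.1) ∂ν) κ :=
    variance_nonneg _ _
  have hbB : 0 ≤ variance (fun q : β' × γ' => ∫ p : β × γ, g (p.2, q.2) ∂ν) κ :=
    variance_nonneg _ _
  have hσnn : 0 ≤ ∫ q : β' × γ', ((∫ p : β × γ, f (p.1, q.1) ^ 2 ∂ν) -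
      (∫ p : β × γ, f (p.1, q.1) ∂ν) ^ 2) ∂κ := by
    rw [← hσsq]
    exact integral_nonneg fun q => sq_nonneg _
  have hτnn : 0 ≤ ∫ q : β' × γ', ((∫ p : β × γ, g (p.2, q.2) ^ 2 ∂ν) -
      (∫ p : β × γ, g (p.2, q.2) ∂ν) ^ 2) ∂κ := by
    rw [← hτsq]
    exact integral_nonneg fun q => sq_nonneg _
  -- total variance decomposition
  have hTVf : ∫ q : β' × γ', ((∫ p : β × γ, f (p.1, q.1) ^ 2 ∂ν) -
        (∫ p : β × γ, f (p.1, q.1) ∂ν) ^ 2) ∂κ =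
      variance (fun p : (β × γ) × (β' × γ') => f (p.1.1, p.2.1)) (ν.prod κ) -
        variance (fun q : β' × γ' => ∫ p : β × γ, f (p.1, q.1) ∂ν) κ := by
    rw [hσsplit, hVF, hA, hF2eq, hFeq]
    ring
  have hTVg : ∫ q : β' × γ', ((∫ p : β × γ, g (p.2, q.2) ^ 2 ∂ν) -
        (∫ p : β × γ, g (p.2, q.2) ∂ν) ^ 2) ∂κ =
      variance (fun p : (β × γ) × (β' × γ') => g (p.1.2, p.2.2)) (ν.prod κ) -
        variance (fun q : β' × γ' => ∫ p : β × γ, g (p.2, q.2) ∂ν) κ := by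
    rw [hτsplit, hVG, hB, hG2eq, hGeq]
    ring
  -- variance comparison
  have hAleVF : variance (fun q : β' × γ' => ∫ p : β × γ, f (p.1, q.1) ∂ν) κ ≤
      variance (fun p : (β × γ) × (β' × γ') => f (p.1.1, p.2.1)) (ν.prod κ) := by
    have := hσnn
    rw [hTVf] at this
    linarith
  have hBleVG : variance (fun q : β' × γ' => ∫ p : β × γ, g (p.2, q.2) ∂ν) κ ≤
      variance (fun p : (β × γ) × (β' × γ') => g (p.1.2, p.2.2)) (ν.prod κ) := by
    have := hτnn
    rw [hTVg] at this
    linarith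
  -- key algebraic inequality
  have hkey := sqrt_key haA hbB hAleVF hBleVG
  -- rewrite the Hölder bound in terms of the variances
  rw [hσsq, hτsq, hTVf, hTVg] at hHol
  -- final assembly
  have hgoal : cov (ν.prod κ) (fun p : (β × γ) × (β' × γ') => f (p.1.1, p.2.1))
        (fun p : (β × γ) × (β' × γ') => g (p.1.2, p.2.2)) ≤
      ρ * (Real.sqrt (variance (fun p : (β × γ) × (β' × γ') => f (p.1.1, p.2.1)) (ν.prod κ)) *
        Real.sqrt (variance (fun p : (β × γ) × (β' × γ') => g (p.1.2, p.2.2)) (ν.prod κ))) := by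
    have hρστ := mul_le_mul_of_nonneg_left hHol hρ
    have hρkey := mul_le_mul_of_nonneg_left hkey hρ
    rw [hcovπ]
    rw [hcovκ] at hcb2
    rw [hIeq]
    rw [hFeq, hGeq]
    calc (∫ q : β' × γ', (∫ p : β × γ, f (p.1, q.1) * g (p.2, q.2) ∂ν) ∂κ) -
          (∫ q : β' × γ', (∫ p : β × γ, f (p.1, q.1) ∂ν) ∂κ) *
            (∫ q : β' × γ', (∫ p : β × γ, g (p.2, q.2) ∂ν) ∂κ) ≤ _ := by
          exact sub_le_sub_right hstep1 _
      _ ≤ ρ * (Real.sqrt (variance (fun p : (β × γ) × (β' × γ') => f (p.1.1, p.2.1)) (ν.prod κ)) *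
          Real.sqrt (variance (fun p : (β × γ) × (β' × γ') => g (p.1.2, p.2.2)) (ν.prod κ))) := by
          rw [hstep2]
          nlinarith [hρστ, hρkey, hcb2]
  exact hgoal

end WitsenAux

namespace WitsenAux

variable {Ω : Type*} [MeasurableSpace Ω] {μ : Measure Ω}

lemma covBound_pair {β γ β' γ' : Type*} [MeasurableSpace β] [MeasurableSpace γ]
    [MeasurableSpace β'] [MeasurableSpace γ'] [IsProbabilityMeasure μ]
    {A : Ω → β} {B : Ω → γ} {C : Ω → β'} {D : Ω → γ'}
    (hA : Measurable A) (hB : Measurable B) (hC : Measurable C) (hD : Measurable D)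
    (hInd : IndepFun (fun ω => (A ω, B ω)) (fun ω => (C ω, D ω)) μ)
    {ρ : ℝ} (hρ : 0 ≤ ρ) (h₁ : CovBound μ A B ρ) (h₂ : CovBound μ C D ρ) :
    CovBound μ (fun ω => (A ω, C ω)) (fun ω => (B ω, D ω)) ρ := by
  have hP : Measurable fun ω => (A ω, B ω) := hA.prodMk hB
  have hQ : Measurable fun ω => (C ω, D ω) := hC.prodMk hD
  haveI : IsProbabilityMeasure (μ.map fun ω => (A ω, B ω)) :=
    Measure.isProbabilityMeasure_map hP.aemeasurable
  haveI : IsProbabilityMeasure (μ.map fun ω => (C ω, D ω)) :=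
    Measure.isProbabilityMeasure_map hQ.aemeasurable
  have hmap : μ.map (fun ω => ((A ω, B ω), (C ω, D ω))) =
      (μ.map fun ω => (A ω, B ω)).prod (μ.map fun ω => (C ω, D ω)) :=
    (indepFun_iff_map_prod_eq_prod_map_map hP.aemeasurable hQ.aemeasurable).1 hInd
  have H1 : CovBound (μ.map fun ω => (A ω, B ω)) Prod.fst Prod.snd ρ :=
    (covBound_map_iff hP measurable_fst measurable_snd).2 h₁
  have H2 : CovBound (μ.map fun ω => (C ω, D ω)) Prod.fst Prod.snd ρ :=
    (covBound_map_iff hQ measurable_fst measurable_snd).2 h₂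
  have key : CovBound ((μ.map fun ω => (A ω, B ω)).prod (μ.map fun ω => (C ω, D ω)))
      (fun p => (p.1.1, p.2.1)) (fun p => (p.1.2, p.2.2)) ρ := core_prod hρ H1 H2
  rw [← hmap] at key
  have := (covBound_map_iff (hP.prodMk hQ)
    ((measurable_fst.comp measurable_fst).prodMk (measurable_fst.comp measurable_snd))
    ((measurable_snd.comp measurable_fst).prodMk (measurable_snd.comp measurable_snd))).1 key
  exact this

end WitsenAux

namespace WitsenAux

variable {Ω : Type*} [MeasurableSpace Ω] {μ : Measure Ω}

lemma covBound_finset [IsProbabilityMeasure μ] {n : ℕ}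
    {β γ : Fin n → Type*} [∀ i, MeasurableSpace (β i)] [∀ i, MeasurableSpace (γ i)]
    (W₁ : ∀ i, Ω → β i) (W₂ : ∀ i, Ω → γ i)
    (hW₁ : ∀ i, Measurable (W₁ i)) (hW₂ : ∀ i, Measurable (W₂ i))
    (hIndep : iIndepFun (m := fun i => (inferInstance : MeasurableSpace (β i × γ i)))
      (fun i ω => (W₁ i ω, W₂ i ω)) μ)
    {ρ : ℝ} (hρ : 0 ≤ ρ) (h : ∀ i, CovBound μ (W₁ i) (W₂ i) ρ)
    (d₁ : ∀ i, β i) (d₂ : ∀ i, γ i) (S : Finset (Fin n)) :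
    CovBound μ (fun ω i => if i ∈ S then W₁ i ω else d₁ i)
      (fun ω i => if i ∈ S then W₂ i ω else d₂ i) ρ := by
  classical
  induction S using Finset.induction_on with
  | empty =>
    simp only [Finset.notMem_empty, if_false]
    intro u v hu hv hU hV
    have hcov' : cov μ (fun ω => u fun i => d₁ i) (fun ω => v fun i => d₂ i) = 0 := by
      unfold cov
      simp [integral_const, measure_univ]
    rw [hcov']
    have : 0 ≤ ρ * (Real.sqrt (variance (fun ω => u fun i => d₁ i) μ) *
        Real.sqrt (variance (fun ω => v fun i => d₂ i) μ)) :=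
      mul_nonneg hρ (mul_nonneg (Real.sqrt_nonneg _) (Real.sqrt_nonneg _))
    exact this
  | @insert j S hjS IH =>
    -- measurability of the padded tuples
    have hAS : Measurable (fun ω => (fun i => if i ∈ S then W₁ i ω else d₁ i : ∀ i, β i)) := by
      refine measurable_pi_lambda _ (fun i => ?_)
      by_cases hi : i ∈ S
      · simpa [hi] using hW₁ i
      · simp [hi]
    have hBS : Measurable (fun ω => (fun i => if i ∈ S then W₂ i ω else d₂ i : ∀ i, γ i)) := by
      refine measurable_pi_lambda _ (fun i => ?_)
      by_cases hi : i ∈ S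
      · simpa [hi] using hW₂ i
      · simp [hi]
    -- independence of the padded pair tuple from the j-th pair
    have hind0 := hIndep.indepFun_finset S {j}
      (Finset.disjoint_singleton_right.2 hjS) (fun i => (hW₁ i).prodMk (hW₂ i))
    have hΦm : Measurable (fun z : (∀ i : (S : Finset (Fin n)), β i × γ i) =>
        ((fun i => if h : i ∈ S then (z ⟨i, h⟩).1 else d₁ i : ∀ i, β i),
         (fun i => if h : i ∈ S then (z ⟨i, h⟩).2 else d₂ i : ∀ i, γ i))) := by
      refine Measurable.prodMk ?_ ?_ <;> refine measurable_pi_lambda _ (fun i => ?_)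
      · by_cases hi : i ∈ S
        · simp only [dif_pos hi]
          exact measurable_fst.comp (measurable_pi_apply _)
        · simp [hi]
      · by_cases hi : i ∈ S
        · simp only [dif_pos hi]
          exact measurable_snd.comp (measurable_pi_apply _)
        · simp [hi]
    have hΨm : Measurable (fun z : (∀ i : ({j} : Finset (Fin n)), β i × γ i) =>
        z ⟨j, Finset.mem_singleton_self j⟩) := measurable_pi_apply _
    have hind1 := hind0.comp hΦm hΨm
    have hfeq : ((fun z : (∀ i : (S : Finset (Fin n)), β i × γ i) =>
        ((fun i => if h : i ∈ S then (z ⟨i, h⟩).1 else d₁ i : ∀ i, β i),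
         (fun i => if h : i ∈ S then (z ⟨i, h⟩).2 else d₂ i : ∀ i, γ i))) ∘
          (fun a (i : (S : Finset (Fin n))) => (W₁ i a, W₂ i a))) =
        fun ω => ((fun i => if i ∈ S then W₁ i ω else d₁ i : ∀ i, β i),
          (fun i => if i ∈ S then W₂ i ω else d₂ i : ∀ i, γ i)) := by
      funext ω
      refine Prod.ext ?_ ?_ <;> funext i <;> by_cases hi : i ∈ S <;>
        simp [Function.comp, hi]
    have hgeq : ((fun z : (∀ i : ({j} : Finset (Fin n)), β i × γ i) =>
        z ⟨j, Finset.mem_singleton_self j⟩) ∘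
          (fun a (i : ({j} : Finset (Fin n))) => (W₁ i a, W₂ i a))) =
        fun ω => (W₁ j ω, W₂ j ω) := rfl
    rw [hfeq, hgeq] at hind1
    -- apply the two-component lemma
    have hpair := covBound_pair hAS hBS (hW₁ j) (hW₂ j) hind1 hρ (IH) (h j)
    -- transport along insertion
    have hι₁ : Measurable (fun p : (∀ i, β i) × β j => Function.update p.1 j p.2) := by
      refine measurable_pi_lambda _ (fun i => ?_)
      rcases eq_or_ne i j with rfl | hne
      · simp only [Function.update_self]
        exact measurable_snd
      · simp only [Function.update_of_ne hne]
        exact (measurable_pi_apply i).comp measurable_fst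
    have hι₂ : Measurable (fun p : (∀ i, γ i) × γ j => Function.update p.1 j p.2) := by
      refine measurable_pi_lambda _ (fun i => ?_)
      rcases eq_or_ne i j with rfl | hne
      · simp only [Function.update_self]
        exact measurable_snd
      · simp only [Function.update_of_ne hne]
        exact (measurable_pi_apply i).comp measurable_fst
    have hcomp := hpair.comp hι₁ hι₂
    have he1 : (fun ω => Function.update
        ((fun i => if i ∈ S then W₁ i ω else d₁ i : ∀ i, β i)) j (W₁ j ω)) =
        fun ω (i : Fin n) => if i ∈ insert j S then W₁ i ω else d₁ i := by
      funext ω i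
      rcases eq_or_ne i j with rfl | hne
      · simp
      · simp [Function.update_of_ne hne, Finset.mem_insert, hne]
    have he2 : (fun ω => Function.update
        ((fun i => if i ∈ S then W₂ i ω else d₂ i : ∀ i, γ i)) j (W₂ j ω)) =
        fun ω (i : Fin n) => if i ∈ insert j S then W₂ i ω else d₂ i := by
      funext ω i
      rcases eq_or_ne i j with rfl | hne
      · simp
      · simp [Function.update_of_ne hne, Finset.mem_insert, hne]
    rw [he1, he2] at hcomp
    exact hcomp

end WitsenAux

open WitsenAux

/-- Witsenhausen's tensorization: for mutually independent pairs `(W₁ᵢ, W₂ᵢ)`,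
`ρₘ(W₁ⁿ, W₂ⁿ) ≤ max_i ρₘ(W₁ᵢ, W₂ᵢ)`. -/
theorem maxCorr_tensorization {Ω : Type*} [MeasurableSpace Ω]
    (μ : Measure Ω) [IsProbabilityMeasure μ] (n : ℕ) (hn : 0 < n)
    {β γ : Fin n → Type*} [∀ i, MeasurableSpace (β i)] [∀ i, MeasurableSpace (γ i)]
    (W₁ : ∀ i, Ω → β i) (W₂ : ∀ i, Ω → γ i)
    (hW₁ : ∀ i, Measurable (W₁ i)) (hW₂ : ∀ i, Measurable (W₂ i))
    (hIndep : iIndepFun (m := fun i => (inferInstance : MeasurableSpace (β i × γ i)))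
      (fun i ω => (W₁ i ω, W₂ i ω)) μ) :
    haveI : Nonempty (Fin n) := Fin.pos_iff_nonempty.mp hn
    maxCorr μ (fun ω i => W₁ i ω) (fun ω i => W₂ i ω) ≤ ⨆ i, maxCorr μ (W₁ i) (W₂ i) := by
  haveI : Nonempty (Fin n) := Fin.pos_iff_nonempty.mp hn
  classical
  have hΩ : Nonempty Ω := by
    by_contra h
    rw [not_nonempty_iff] at h
    have h1 := measure_univ (μ := μ)
    rw [Set.univ_eq_empty_iff.2 h] at h1
    simp at h1
  obtain ⟨ω₀⟩ := hΩ
  set ρ : ℝ := ⨆ i, maxCorr μ (W₁ i) (W₂ i) with hρ_def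
  have hbdd : BddAbove (Set.range fun i => maxCorr μ (W₁ i) (W₂ i)) :=
    Set.Finite.bddAbove (Set.finite_range _)
  have hρ_each : ∀ i, maxCorr μ (W₁ i) (W₂ i) ≤ ρ := fun i => le_ciSup hbdd i
  have hρ0 : 0 ≤ ρ := le_trans maxCorr_nonneg (hρ_each (Classical.arbitrary (Fin n)))
  have hcb : ∀ i, CovBound μ (W₁ i) (W₂ i) ρ := fun i =>
    (maxCorr_covBound (hW₁ i) (hW₂ i)).mono (hρ_each i)
  have hmain := covBound_finset W₁ W₂ hW₁ hW₂ hIndep hρ0 hcb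
    (fun i => W₁ i ω₀) (fun i => W₂ i ω₀) Finset.univ
  have heq1 : (fun ω (i : Fin n) => if i ∈ Finset.univ then W₁ i ω else W₁ i ω₀) =
      fun ω i => W₁ i ω := by
    funext ω i; simp
  have heq2 : (fun ω (i : Fin n) => if i ∈ Finset.univ then W₂ i ω else W₂ i ω₀) =
      fun ω i => W₂ i ω := by
    funext ω i; simp
  rw [heq1, heq2] at hmain
  -- hmain : CovBound μ (fun ω i => W₁ i ω) (fun ω i => W₂ i ω) ρ
  refine Real.sSup_le ?_ hρ0
  rintro r ⟨f, g, hf, hg, hF, hG, hvF, hvG, rfl⟩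
  have hcov := hmain f g hf hg hF hG
  have hd : 0 < Real.sqrt (variance (fun ω => f fun i => W₁ i ω) μ) *
      Real.sqrt (variance (fun ω => g fun i => W₂ i ω) μ) :=
    mul_pos (Real.sqrt_pos.2 hvF) (Real.sqrt_pos.2 hvG)
  rw [corr, div_le_iff₀ hd]
  exact hcov
end
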